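/- Let p_1,...,p_N ∈ ℝ^d be the vertices of a finite connected graph G with Euclidean edge weights w(u,v) = ‖p_v − p_u‖ and shortest-path distance S, let V ∈ ℝ^{d×k} have orthonormal columns with projected weights w'(u,v) = ‖Vᵀ(p_v − p_u)‖ and projected shortest-path distance S̃, and define r_{ij} = ‖p_j − p_i‖/S(p_i,p_j) and r̃_{ij} = ‖Vᵀ(p_j − p_i)‖/S̃(p_i,p_j) for p_i ≠ p_j. Let φ_G = min over all edges e of G (viewed as vectors p_v − p_u ≠ 0 in ℝ^d) of ‖Vᵀe‖/‖e‖, and assume φ_G > 0. Then for every pair (i,j) with p_i ≠ p_j and ‖Vᵀ(p_j − p_i)‖ > 0, the distortion satisfies r̃_{ij}/r_{ij} ≤ 1/φ_G. -/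

import Mathlib

open scoped BigOperators

/-- Length of a walk in a graph under an edge-weight function `w`:
the sum of the weights of its edges (darts). -/
noncomputable def SimpleGraph.Walk.wLength {V : Type*} {G : SimpleGraph V}
    (w : V → V → ℝ) {i j : V} (p : G.Walk i j) : ℝ :=
  (p.darts.map fun d => w d.fst d.snd).sum

/-- Shortest-path distance between `i` and `j`: the infimum of the lengths of
walks from `i` to `j` under the edge-weight function `w`. -/
noncomputable def spDist {V : Type*} (G : SimpleGraph V) (w : V → V → ℝ) (i j : V) : ℝ :=
  sInf {L | ∃ p : G.Walk i j, p.wLength w = L}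

lemma contract {d k : ℕ} (V : Matrix (Fin d) (Fin k) ℝ) (hV : V.transpose * V = 1)
    (x : EuclideanSpace ℝ (Fin d)) :
    ‖(Matrix.toEuclideanLin V.transpose) x‖ ≤ ‖x‖ := by
  set T := Matrix.toEuclideanLin V.transpose with hT
  set U := Matrix.toEuclideanLin V with hU
  have hTU : ∀ y : EuclideanSpace ℝ (Fin k), T (U y) = y := by
    intro y
    have h1 : T (U y) = Matrix.toEuclideanLin (V.transpose * V) y := by
      simp [hT, hU, Matrix.toEuclideanLin_apply, Matrix.mulVec_mulVec]
    rw [h1, hV]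
    simp [Matrix.toEuclideanLin_apply]
  have hadj : (T : EuclideanSpace ℝ (Fin d) →ₗ[ℝ] EuclideanSpace ℝ (Fin k))
      = LinearMap.adjoint (U : EuclideanSpace ℝ (Fin k) →ₗ[ℝ] EuclideanSpace ℝ (Fin d)) := by
    rw [hT, hU, ← Matrix.toEuclideanLin_conjTranspose_eq_adjoint]
    congr 1
  have inner_left : ∀ (y : EuclideanSpace ℝ (Fin d)) (z : EuclideanSpace ℝ (Fin k)),
      (inner ℝ (T y) z : ℝ) = inner ℝ y (U z) := by
    intro y z
    have := LinearMap.adjoint_inner_left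
      (𝕜 := ℝ) (U : EuclideanSpace ℝ (Fin k) →ₗ[ℝ] EuclideanSpace ℝ (Fin d)) z y
    rw [← hadj] at this
    exact this
  have key : ‖T x‖ ^ 2 = inner ℝ x (U (T x)) := by
    rw [← real_inner_self_eq_norm_sq]
    exact inner_left x (T x)
  have hnormUT : ‖U (T x)‖ = ‖T x‖ := by
    have h2 : ‖U (T x)‖ ^ 2 = ‖T x‖ ^ 2 := by
      rw [← real_inner_self_eq_norm_sq, ← real_inner_self_eq_norm_sq]
      calc (inner ℝ (U (T x)) (U (T x)) : ℝ) = inner ℝ (T (U (T x))) (T x) := by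
            rw [inner_left (U (T x)) (T x)]
        _ = inner ℝ (T x) (T x) := by rw [hTU]
    have h1 : (0:ℝ) ≤ ‖U (T x)‖ := norm_nonneg _
    have h3 : (0:ℝ) ≤ ‖T x‖ := norm_nonneg _
    nlinarith
  have hc : ‖T x‖ ^ 2 ≤ ‖T x‖ * ‖x‖ := by
    rw [key]
    calc (inner ℝ x (U (T x)) : ℝ) ≤ ‖x‖ * ‖U (T x)‖ := real_inner_le_norm _ _
      _ = ‖T x‖ * ‖x‖ := by rw [hnormUT]; ring
  rcases eq_or_lt_of_le (norm_nonneg (T x)) with h | h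
  · rw [← h]; exact norm_nonneg x
  · nlinarith

lemma walk_norm_le {N : ℕ} {G : SimpleGraph (Fin N)} {E : Type*} [NormedAddCommGroup E]
    (f : Fin N → E) {a b : Fin N} (q : G.Walk a b) :
    ‖f b - f a‖ ≤ q.wLength (fun u v => ‖f v - f u‖) := by
  induction q with
  | nil => simp [SimpleGraph.Walk.wLength]
  | cons h q ih =>
    rename_i u v c
    simp only [SimpleGraph.Walk.wLength, SimpleGraph.Walk.darts_cons, List.map_cons,
      List.sum_cons] at *
    calc ‖f c - f u‖ ≤ ‖f v - f u‖ + ‖f c - f v‖ := by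
          have h3 : f c - f u = (f v - f u) + (f c - f v) := by abel
          rw [h3]; exact norm_add_le _ _
      _ ≤ ‖f v - f u‖ + (q.darts.map fun d => ‖f d.snd - f d.fst‖).sum := by linarith

lemma walk_compare {N : ℕ} {G : SimpleGraph (Fin N)} (w w' : Fin N → Fin N → ℝ) (c : ℝ)
    (h : ∀ u v, G.Adj u v → c * w u v ≤ w' u v) {a b : Fin N} (q : G.Walk a b) :
    c * q.wLength w ≤ q.wLength w' := by
  induction q with
  | nil => simp [SimpleGraph.Walk.wLength]
  | cons hadj q ih =>
    simp only [SimpleGraph.Walk.wLength, SimpleGraph.Walk.darts_cons, List.map_cons,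
      List.sum_cons] at *
    have := h _ _ hadj
    linarith [this, ih]

/-- **Uniform graph-wise bound.**
On a finite connected graph on points `p₁,…,p_N ⊂ ℝ^d` (edges viewed as nonzero
vectors `p v - p u`) with Euclidean weights `w(u,v) = ‖p v - p u‖` and projected
weights `w'(u,v) = ‖Vᵀ(p v - p u)‖` for `V` with orthonormal columns, let
`φ_G = min_{e ∈ E(G)} ‖Vᵀe‖/‖e‖` and assume `φ_G > 0`. Then for every pair
`(i,j)` with `p i ≠ p j` and `‖Vᵀ(p j - p i)‖ > 0`, the ratios
`r = ‖p j - p i‖/S(i,j)` and `r̃ = ‖Vᵀ(p j - p i)‖/S̃(i,j)` satisfy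
`r̃/r ≤ 1/φ_G`. -/
theorem uniform_graphwise_bound
    {N d k : ℕ} (G : SimpleGraph (Fin N)) (hGconn : G.Connected)
    (p : Fin N → EuclideanSpace ℝ (Fin d))
    (hedge : ∀ u v : Fin N, G.Adj u v → p u ≠ p v)
    (V : Matrix (Fin d) (Fin k) ℝ) (hV : V.transpose * V = 1)
    (w w' : Fin N → Fin N → ℝ)
    (hw : ∀ u v, w u v = ‖p v - p u‖)
    (hw' : ∀ u v, w' u v = ‖(Matrix.toEuclideanLin V.transpose) (p v - p u)‖)
    (φG : ℝ)
    (hφG : IsLeast {t | ∃ u v : Fin N, G.Adj u v ∧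
        t = ‖(Matrix.toEuclideanLin V.transpose) (p v - p u)‖ / ‖p v - p u‖} φG)
    (hφGpos : 0 < φG) :
    ∀ i j : Fin N, p i ≠ p j →
      0 < ‖(Matrix.toEuclideanLin V.transpose) (p j - p i)‖ →
      (‖(Matrix.toEuclideanLin V.transpose) (p j - p i)‖ / spDist G w' i j) /
        (‖p j - p i‖ / spDist G w i j) ≤ 1 / φG := by
  intro i j hij ha
  set T := Matrix.toEuclideanLin V.transpose with hT
  set a := ‖T (p j - p i)‖ with haa
  set b := ‖p j - p i‖ with hbb
  have hb : 0 < b := by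
    rw [hbb, norm_pos_iff]
    exact sub_ne_zero.mpr (Ne.symm hij)
  have hab : a ≤ b := contract V hV _
  -- rewrite weight functions
  have hwfun : w = fun u v => ‖p v - p u‖ := by funext u v; exact hw u v
  have hw'fun : w' = fun u v => ‖(fun n => T (p n)) v - (fun n => T (p n)) u‖ := by
    funext u v
    rw [hw' u v]
    simp [map_sub]
  -- sets of walk lengths
  set A : Set ℝ := {L | ∃ q : G.Walk i j, q.wLength w = L} with hA
  set A' : Set ℝ := {L | ∃ q : G.Walk i j, q.wLength w' = L} with hA'
  have hAne : A.Nonempty := ⟨_, (hGconn.preconnected i j).some, rfl⟩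
  have hA'ne : A'.Nonempty := ⟨_, (hGconn.preconnected i j).some, rfl⟩
  have hAlb : ∀ L ∈ A, b ≤ L := by
    rintro L ⟨q, rfl⟩
    rw [hwfun]
    exact walk_norm_le p q
  have hA'lb : ∀ L ∈ A', a ≤ L := by
    rintro L ⟨q, rfl⟩
    rw [hw'fun, haa]
    have := walk_norm_le (fun n => T (p n)) q
    simpa [map_sub] using this
  have hSw : b ≤ spDist G w i j := le_csInf hAne hAlb
  have hSwpos : 0 < spDist G w i j := lt_of_lt_of_le hb hSw
  have hBddA : BddBelow A := ⟨b, hAlb⟩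
  -- edgewise comparison
  have hedgecmp : ∀ u v, G.Adj u v → φG * w u v ≤ w' u v := by
    intro u v huv
    have hmem : w' u v / w u v ∈ {t | ∃ u v : Fin N, G.Adj u v ∧
        t = ‖(Matrix.toEuclideanLin V.transpose) (p v - p u)‖ / ‖p v - p u‖} := by
      exact ⟨u, v, huv, by rw [hw' u v, hw u v]⟩
    have hle : φG ≤ w' u v / w u v := hφG.2 hmem
    have hwpos : 0 < w u v := by
      rw [hw u v, norm_pos_iff]
      exact sub_ne_zero.mpr (Ne.symm (hedge u v huv))
    calc φG * w u v ≤ (w' u v / w u v) * w u v := by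
          exact mul_le_mul_of_nonneg_right hle (le_of_lt hwpos)
      _ = w' u v := div_mul_cancel₀ _ (ne_of_gt hwpos)
  -- S̃ ≥ φG * S
  have hSS : φG * spDist G w i j ≤ spDist G w' i j := by
    apply le_csInf hA'ne
    rintro L ⟨q, rfl⟩
    calc φG * spDist G w i j ≤ φG * q.wLength w := by
          apply mul_le_mul_of_nonneg_left _ (le_of_lt hφGpos)
          exact csInf_le hBddA ⟨q, rfl⟩
      _ ≤ q.wLength w' := walk_compare w w' φG hedgecmp q
  have hSw'pos : 0 < spDist G w' i j :=
    lt_of_lt_of_le (mul_pos hφGpos hSwpos) hSS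
  set S := spDist G w i j
  set S' := spDist G w' i j
  rw [div_le_div_iff₀ (div_pos hb hSwpos) hφGpos, one_mul, div_mul_eq_mul_div,
    div_le_div_iff₀ hSw'pos hSwpos]
  nlinarith [mul_le_mul_of_nonneg_left hSS (le_of_lt (lt_of_lt_of_le ha hab)),
    mul_le_mul_of_nonneg_right hab (le_of_lt (mul_pos hφGpos hSwpos))]
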